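/- For all x, y ∈ Y₀ (coherent sequences in X₀), regarded as elements of X by taking x_0 = y_0 = 0 in ℝ/ℤ, one has d(x, y) ≥ r^{-1} |exp(2πi r^{-1}) − 1| · ρ(x, y). -/

import Mathlib

open scoped Real
noncomputable section

/-- `X = ∏_{l≥0} ℝ/r^l ℤ`, with coordinatewise addition and the product topology. -/
abbrev SolX (r : ℕ) := (l : ℕ) → AddCircle ((r : ℝ) ^ l)

/-- The natural homomorphism `ℝ/r^{l+1}ℤ → ℝ/r^l ℤ` induced by the identity on `ℝ`. -/
def natHom (r l : ℕ) : AddCircle ((r : ℝ) ^ (l + 1)) →+ AddCircle ((r : ℝ) ^ l) :=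
  QuotientAddGroup.map _ _ (AddMonoidHom.id ℝ) (by
    intro x hx
    rw [AddSubgroup.mem_comap]
    obtain ⟨k, hk⟩ := AddSubgroup.mem_zmultiples_iff.mp hx
    refine AddSubgroup.mem_zmultiples_iff.mpr ⟨k * (r : ℤ), ?_⟩
    simp only [AddMonoidHom.id_apply, zsmul_eq_mul] at hk ⊢
    rw [← hk]
    push_cast
    ring)

/-- `x ∈ X` is a coherent sequence if `x l` is the image of `x (l+1)` under the natural
homomorphism, for every `l`. -/
def Coherent (r : ℕ) (x : SolX r) : Prop := ∀ l, natHom r l (x (l + 1)) = x l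

/-- The standard isomorphism `φ_l : ℝ/r^l ℤ → 𝕋 ⊆ ℂ`, `φ_l(a mod r^l ℤ) = exp(2πi r^{-l} a)`,
viewed as a complex-valued function. -/
def phi (r l : ℕ) (x : AddCircle ((r : ℝ) ^ l)) : ℂ := (AddCircle.toCircle x : ℂ)

/-- The `l`-th term `r^{-l} |φ_l(x_l) - φ_l(y_l)|`. -/
def dterm (r : ℕ) (x y : SolX r) (l : ℕ) : ℝ :=
  ((r : ℝ) ^ l)⁻¹ * ‖phi r l (x l) - phi r l (y l)‖

/-- `d(x,y) = max_{l ≥ 0} r^{-l} |φ_l(x_l) - φ_l(y_l)|`. -/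
def dX (r : ℕ) (x y : SolX r) : ℝ := ⨆ l, dterm r x y l

/-- `X₀ = ∏_{l≥1} ℤ/r^l ℤ`; the coordinate indexed by `l : ℕ` here is the factor
`ℤ/r^(l+1) ℤ` (paper index `l+1`).  Each factor carries the discrete topology, and `X₀`
the product topology. -/
abbrev X0 (r : ℕ) := (l : ℕ) → ZMod (r ^ (l + 1))

/-- For `x ≠ y`, the (`0`-based) index of the first coordinate where `x` and `y` differ;
in the paper's (`1`-based) notation this is `l(x,y) - 1`. -/
def firstDiff (r : ℕ) (x y : X0 r) : ℕ := sInf {n | x n ≠ y n}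

open Classical in
/-- `ρ(x,y) = r^{-l(x,y)+1}`, and `ρ(x,x) = 0`. -/
def rho (r : ℕ) (x y : X0 r) : ℝ :=
  if x = y then 0 else ((r : ℝ) ^ firstDiff r x y)⁻¹

/-- The identification of `X₀` with a subset of `X`: the `l = 0` coordinate is `0` in `ℝ/ℤ`,
and for `l ≥ 1` the coordinate `x_l ∈ ℤ/r^l ℤ` is regarded as an element of `ℝ/r^l ℤ`. -/
def emb (r : ℕ) (x : X0 r) : SolX r
  | 0 => 0
  | (l + 1) => (((x l).val : ℝ) : AddCircle ((r : ℝ) ^ (l + 1)))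

/-- `x ∈ X₀` is a coherent sequence if `x l` is the image of `x (l+1)` under the natural
ring homomorphism `ℤ/r^{l+2}ℤ → ℤ/r^{l+1}ℤ`, for every `l`. -/
def Coherent0 (r : ℕ) (x : X0 r) : Prop :=
  ∀ l, ZMod.castHom (pow_dvd_pow r (Nat.le_succ (l + 1))) (ZMod (r ^ (l + 1))) (x (l + 1)) = x l


lemma abs_exp_I_sub_one (θ : ℝ) :
    ‖Complex.exp ((θ : ℂ) * Complex.I) - 1‖ = 2 * |Real.sin (θ / 2)| := by
  have h1 : Real.cos θ = 1 - 2 * Real.sin (θ / 2) ^ 2 := by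
    have h2 := Real.cos_two_mul (θ / 2)
    have h3 := Real.sin_sq_add_cos_sq (θ / 2)
    have h4 : 2 * (θ / 2) = θ := by ring
    rw [h4] at h2
    nlinarith
  rw [Complex.norm_def, Complex.normSq_apply]
  have hre : (Complex.exp ((θ : ℂ) * Complex.I) - 1).re = Real.cos θ - 1 := by
    simp [Complex.exp_ofReal_mul_I_re]
  have him : (Complex.exp ((θ : ℂ) * Complex.I) - 1).im = Real.sin θ := by
    simp [Complex.exp_ofReal_mul_I_im]
  rw [hre, him]
  have heq : (Real.cos θ - 1) * (Real.cos θ - 1) + Real.sin θ * Real.sin θ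
      = (2 * |Real.sin (θ / 2)|) ^ 2 := by
    have h5 := Real.sin_sq_add_cos_sq θ
    have h6 : |Real.sin (θ / 2)| ^ 2 = Real.sin (θ / 2) ^ 2 := sq_abs _
    nlinarith
  rw [heq, Real.sqrt_sq (by positivity)]

lemma dterm_le_two (r : ℕ) (hr : 1 ≤ r) (x y : SolX r) (l : ℕ) : dterm r x y l ≤ 2 := by
  have h1 : ((r : ℝ) ^ l)⁻¹ ≤ 1 := by
    rw [inv_le_one_iff₀]
    right
    exact one_le_pow₀ (by exact_mod_cast hr)
  have h2 : ‖phi r l (x l) - phi r l (y l)‖ ≤ 2 := by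
    calc ‖phi r l (x l) - phi r l (y l)‖
        ≤ ‖phi r l (x l)‖ + ‖phi r l (y l)‖ :=
          norm_sub_le _ _
      _ = 2 := by rw [phi, phi, Circle.norm_coe, Circle.norm_coe]; norm_num
  have := mul_le_mul h1 h2 (by positivity) zero_le_one
  simpa [dterm] using this

lemma dX_ge (r : ℕ) (hr : 1 ≤ r) (x y : SolX r) (l : ℕ) : dterm r x y l ≤ dX r x y :=
  le_ciSup ⟨2, by rintro _ ⟨l, rfl⟩; exact dterm_le_two r hr x y l⟩ l

theorem stmt_7 (r : ℕ) (hr : 2 ≤ r) :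
    ∀ x y : X0 r, Coherent0 r x → Coherent0 r y →
      (r : ℝ)⁻¹ * ‖Complex.exp (2 * (Real.pi : ℂ) * Complex.I * (r : ℂ)⁻¹) - 1‖ *
          rho r x y ≤ dX r (emb r x) (emb r y) := by
  intro x y hx hy
  have hr0 : (0 : ℝ) < r := by positivity
  have hr2 : (2 : ℝ) ≤ r := by exact_mod_cast hr
  have habs : ‖Complex.exp (2 * (Real.pi : ℂ) * Complex.I * (r : ℂ)⁻¹) - 1‖
      = 2 * Real.sin (Real.pi / r) := by
    have h1 : (2 * (Real.pi : ℂ) * Complex.I * (r : ℂ)⁻¹)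
        = ((2 * Real.pi / r : ℝ) : ℂ) * Complex.I := by push_cast; ring
    rw [h1, abs_exp_I_sub_one]
    have h2 : 2 * Real.pi / (r : ℝ) / 2 = Real.pi / r := by ring
    rw [h2, abs_of_nonneg]
    apply Real.sin_nonneg_of_nonneg_of_le_pi (by positivity)
    rw [div_le_iff₀ hr0]
    nlinarith [Real.pi_pos]
  by_cases hxy : x = y
  · subst hxy
    rw [rho, if_pos rfl, mul_zero]
    calc (0 : ℝ) ≤ dterm r (emb r x) (emb r x) 0 := by rw [dterm]; positivity
      _ ≤ dX r (emb r x) (emb r x) := dX_ge r (by omega) _ _ 0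
  · obtain ⟨n, hn⟩ : ∃ n, n = firstDiff r x y := ⟨_, rfl⟩
    rw [rho, if_neg hxy, habs, ← hn]
    have hne : {m | x m ≠ y m}.Nonempty := by
      by_contra h
      rw [Set.not_nonempty_iff_eq_empty] at h
      apply hxy
      funext m
      by_contra hm
      exact (Set.eq_empty_iff_forall_notMem.mp h m) hm
    have hmem : x n ≠ y n := by rw [hn]; exact Nat.sInf_mem hne
    haveI : NeZero (r ^ (n + 1)) := ⟨pow_ne_zero _ (by omega)⟩
    obtain ⟨d, hd⟩ : ∃ d : ZMod (r ^ (n + 1)), d = x n - y n := ⟨_, rfl⟩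
    have hdne : d ≠ 0 := hd ▸ sub_ne_zero_of_ne hmem
    have hdvd : r ^ n ∣ d.val := by
      rcases Nat.eq_zero_or_pos n with h0 | hpos
      · subst h0; simpa using one_dvd d.val
      · obtain ⟨m, hm'⟩ : ∃ m, n = m + 1 := ⟨n - 1, by omega⟩
        subst hm'
        haveI : NeZero (r ^ (m + 1)) := ⟨pow_ne_zero _ (by omega)⟩
        have hxm : x m = y m := by
          by_contra h
          have hle : firstDiff r x y ≤ m := Nat.sInf_le h
          omega
        have hc : ZMod.castHom (pow_dvd_pow r (Nat.le_succ (m + 1)))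
            (ZMod (r ^ (m + 1))) d = 0 := by
          rw [hd, map_sub, hx m, hy m, hxm, sub_self]
        have hcast : (d.val : ZMod (r ^ (m + 1))) = 0 := by
          rwa [ZMod.natCast_val, ← ZMod.castHom_apply
            (h := pow_dvd_pow r (Nat.le_succ (m + 1)))]
        rwa [ZMod.natCast_eq_zero_iff] at hcast
    obtain ⟨u, hu⟩ := hdvd
    have hval_lt : d.val < r ^ (n + 1) := ZMod.val_lt d
    have hval_ne : d.val ≠ 0 := fun h => hdne ((ZMod.val_eq_zero d).mp h)
    have hrn : 0 < r ^ n := Nat.pow_pos (n := n) (by omega)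
    have hu1 : 1 ≤ u := by
      rcases Nat.eq_zero_or_pos u with h | h
      · exfalso; apply hval_ne; rw [hu, h, Nat.mul_zero]
      · exact h
    have hur : u < r := by
      by_contra h
      push_neg at h
      have : r ^ (n + 1) ≤ d.val := by
        rw [hu, pow_succ]
        exact Nat.mul_le_mul_left _ h
      omega
    set p : ℝ := (r : ℝ) ^ (n + 1) with hp
    set A : AddCircle p := (((x n).val : ℝ) : AddCircle p) with hA
    set B : AddCircle p := (((y n).val : ℝ) : AddCircle p) with hB
    have hsub : A - B = ((d.val : ℝ) : AddCircle p) := by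
      rw [hA, hB, ← QuotientAddGroup.mk_sub]
      rw [QuotientAddGroup.eq_iff_sub_mem]
      have hint : ((r : ℤ) ^ (n + 1)) ∣ (((x n).val : ℤ) - (y n).val - d.val) := by
        have hz : ((((x n).val : ℤ) - (y n).val - d.val : ℤ) : ZMod (r ^ (n + 1))) = 0 := by
          push_cast
          rw [ZMod.natCast_val, ZMod.natCast_val, ZMod.natCast_val,
            ZMod.cast_id, ZMod.cast_id, ZMod.cast_id, hd]
          ring
        rw [ZMod.intCast_zmod_eq_zero_iff_dvd] at hz
        exact_mod_cast hz
      obtain ⟨k, hk⟩ := hint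
      refine AddSubgroup.mem_zmultiples_iff.mpr ⟨k, ?_⟩
      have hk' : (((x n).val : ℝ) - (y n).val - d.val) = (r : ℝ) ^ (n + 1) * k := by
        exact_mod_cast congrArg (Int.cast : ℤ → ℝ) hk
      rw [zsmul_eq_mul, hp]
      linarith
    have hterm : dterm r (emb r x) (emb r y) (n + 1)
        = ((r : ℝ) ^ (n + 1))⁻¹ * (2 * Real.sin (Real.pi * u / r)) := by
      have hphi : ‖phi r (n + 1) (emb r x (n + 1)) - phi r (n + 1) (emb r y (n + 1))‖
          = 2 * Real.sin (Real.pi * u / r) := by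
        have e1 : emb r x (n + 1) = A := rfl
        have e2 : emb r y (n + 1) = B := rfl
        rw [e1, e2, phi, phi]
        have hBA : B + (A - B) = A := by abel
        have hfac : (AddCircle.toCircle A : ℂ) - AddCircle.toCircle B
            = (AddCircle.toCircle B : ℂ) * ((AddCircle.toCircle (A - B) : ℂ) - 1) := by
          rw [mul_sub, mul_one, ← Circle.coe_mul, ← AddCircle.toCircle_add, hBA]
        rw [hfac, norm_mul, Circle.norm_coe, one_mul, hsub]
        have hexp : (AddCircle.toCircle ((d.val : ℝ) : AddCircle p) : ℂ)
            = Complex.exp (((2 * Real.pi * u / r : ℝ) : ℂ) * Complex.I) := by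
          rw [AddCircle.toCircle_apply_mk, Circle.coe_exp]
          have hdu : (d.val : ℝ) = (r : ℝ) ^ n * u := by exact_mod_cast hu
          have harg : 2 * Real.pi / p * (d.val : ℝ) = 2 * Real.pi * u / r := by
            rw [hdu, hp, pow_succ, div_mul_eq_mul_div,
              div_eq_div_iff (by positivity) (by positivity)]
            ring
          rw [harg]
        rw [hexp, abs_exp_I_sub_one]
        have h2 : 2 * Real.pi * u / (r : ℝ) / 2 = Real.pi * u / r := by ring
        rw [h2, abs_of_nonneg]
        apply Real.sin_nonneg_of_nonneg_of_le_pi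
        · positivity
        · rw [div_le_iff₀ hr0]
          have : (u : ℝ) ≤ r := by exact_mod_cast hur.le
          nlinarith [Real.pi_pos]
      rw [dterm, hphi]
    have hsin : Real.sin (Real.pi / r) ≤ Real.sin (Real.pi * u / r) := by
      have hpi := Real.pi_pos
      have hru : (1 : ℝ) ≤ u := by exact_mod_cast hu1
      have hur' : (u : ℝ) ≤ (r : ℝ) - 1 := by
        have : (u : ℝ) + 1 ≤ r := by exact_mod_cast hur
        linarith
      have hr1 : (2 : ℝ) ≤ r := by exact_mod_cast hr
      have ha : Real.pi / r ∈ Set.Icc 0 Real.pi :=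
        ⟨by positivity, by rw [div_le_iff₀ hr0]; nlinarith⟩
      have hb : Real.pi * ((r : ℝ) - 1) / r ∈ Set.Icc 0 Real.pi := by
        constructor
        · apply div_nonneg _ hr0.le
          nlinarith
        · rw [div_le_iff₀ hr0]; nlinarith
      have hab : Real.pi / r ≤ Real.pi * ((r : ℝ) - 1) / r := by
        rw [show Real.pi / (r : ℝ) = Real.pi * 1 / r by ring]
        gcongr
        linarith
      have hz : Real.pi * u / r ∈ Set.Icc (Real.pi / r) (Real.pi * ((r : ℝ) - 1) / r) := by
        constructor
        · rw [show Real.pi / (r : ℝ) = Real.pi * 1 / r by ring]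
          gcongr
        · gcongr
      have hmin := strictConcaveOn_sin_Icc.concaveOn.ge_on_segment ha hb
        (by rw [segment_eq_Icc hab]; exact hz)
      have hbs : Real.sin (Real.pi * ((r : ℝ) - 1) / r) = Real.sin (Real.pi / r) := by
        have : Real.pi * ((r : ℝ) - 1) / r = Real.pi - Real.pi / r := by
          field_simp
        rw [this, Real.sin_pi_sub]
      rw [hbs, min_self] at hmin
      exact hmin
    calc (r : ℝ)⁻¹ * (2 * Real.sin (Real.pi / r)) * ((r : ℝ) ^ n)⁻¹
        = ((r : ℝ) ^ n)⁻¹ * (r : ℝ)⁻¹ * (2 * Real.sin (Real.pi / r)) := by ring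
      _ ≤ ((r : ℝ) ^ n)⁻¹ * (r : ℝ)⁻¹ * (2 * Real.sin (Real.pi * u / r)) := by
          apply mul_le_mul_of_nonneg_left (by linarith) (by positivity)
      _ = ((r : ℝ) ^ (n + 1))⁻¹ * (2 * Real.sin (Real.pi * u / r)) := by
          rw [pow_succ, mul_inv]
      _ = dterm r (emb r x) (emb r y) (n + 1) := hterm.symm
      _ ≤ dX r (emb r x) (emb r y) := dX_ge r (by omega) _ _ (n + 1)
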